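/- Let (d_i)_{i≥1} and (ρ_i)_{i≥1} be sequences of positive reals with 0 < ρ_i ≤ d_i for all i ≥ 1 and inf_{i≥1} d_i > 0, let d_0 > 0, and define F(x) := (1/(x+d_0))·∑_{i=1}^∞ i·ρ_i·∏_{j=1}^i x/(x+d_j) for x ≥ 0. If there is a constant K > 0 such that i·ρ_i ≤ K·d_i for all i ≥ 1, then F(x) ≤ K for all x ≥ 0; moreover, setting m := sup_{x ≥ 0} F(x), one has m > 0, for every c with 0 < c < m there exists x > 0 with F(x) = c, and for every c > m there is no x ≥ 0 with F(x) = c. -/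

import Mathlib

open Filter

private noncomputable def Pprod (d : ℕ → ℝ) (x : ℝ) (n : ℕ) : ℝ := ∏ j ∈ Finset.Icc 1 n, x / (x + d j)

private lemma Pprod_zero (d : ℕ → ℝ) (x : ℝ) : Pprod d x 0 = 1 := by
  simp [Pprod]

private lemma Pprod_succ (d : ℕ → ℝ) (x : ℝ) (n : ℕ) :
    Pprod d x (n + 1) = Pprod d x n * (x / (x + d (n + 1))) := by
  simp only [Pprod]
  exact Finset.prod_Icc_succ_top (Nat.le_add_left 1 n) _

private lemma Pprod_nonneg {d : ℕ → ℝ} {x : ℝ} (hx : 0 ≤ x)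
    (hd : ∀ j : ℕ, 1 ≤ j → 0 < d j) (n : ℕ) : 0 ≤ Pprod d x n := by
  refine Finset.prod_nonneg fun j hj => ?_
  have hj1 : 1 ≤ j := (Finset.mem_Icc.1 hj).1
  exact div_nonneg hx (by linarith [hd j hj1])

private lemma Pprod_telescope {d : ℕ → ℝ} {x : ℝ} (hx : 0 ≤ x)
    (hd : ∀ j : ℕ, 1 ≤ j → 0 < d j) (n : ℕ) :
    d (n + 1) * Pprod d x (n + 1) = x * (Pprod d x n - Pprod d x (n + 1)) := by
  rw [Pprod_succ]
  have hpos : 0 < x + d (n + 1) := by linarith [hd (n + 1) (Nat.le_add_left 1 n)]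
  field_simp
  ring

theorem silicosis_equilibrium_bounded_case (d ρ : ℕ → ℝ)
    (hρ : ∀ i : ℕ, 1 ≤ i → 0 < ρ i) (hρd : ∀ i : ℕ, 1 ≤ i → ρ i ≤ d i)
    (hz : 0 < ⨅ i : ℕ, d (i + 1)) (d₀ : ℝ) (hd₀ : 0 < d₀)
    (F : ℝ → ℝ)
    (hF : ∀ x : ℝ, F x = (1 / (x + d₀)) *
      ∑' i : ℕ, ((i + 1 : ℕ) : ℝ) * ρ (i + 1) * ∏ j ∈ Finset.Icc 1 (i + 1), x / (x + d j))
    (K : ℝ) (hK : 0 < K) (h : ∀ i : ℕ, 1 ≤ i → (i : ℝ) * ρ i ≤ K * d i) :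
    (∀ x : ℝ, 0 ≤ x → F x ≤ K) ∧
      0 < sSup (F '' Set.Ici 0) ∧
      (∀ c : ℝ, 0 < c → c < sSup (F '' Set.Ici 0) → ∃ x : ℝ, 0 < x ∧ F x = c) ∧
      (∀ c : ℝ, sSup (F '' Set.Ici 0) < c → ¬ ∃ x : ℝ, 0 ≤ x ∧ F x = c) := by
  set δ := ⨅ i : ℕ, d (i + 1) with hδdef
  -- the infimum bound
  have hbdd : BddBelow (Set.range fun i : ℕ => d (i + 1)) := by
    by_contra hb
    have : δ = 0 := Real.iInf_of_not_bddBelow hb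
    rw [this] at hz; exact lt_irrefl 0 hz
  have hdδ : ∀ j : ℕ, 1 ≤ j → δ ≤ d j := by
    intro j hj
    obtain ⟨i, rfl⟩ := Nat.exists_eq_add_of_le hj
    have := ciInf_le hbdd i
    simpa [Nat.add_comm] using this
  have hdpos : ∀ j : ℕ, 1 ≤ j → 0 < d j := fun j hj => lt_of_lt_of_le hz (hdδ j hj)
  -- the term function
  set a : ℕ → ℝ → ℝ := fun i x => ((i + 1 : ℕ) : ℝ) * ρ (i + 1) * Pprod d x (i + 1) with ha
  have hFa : ∀ x : ℝ, F x = (1 / (x + d₀)) * ∑' i : ℕ, a i x := by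
    intro x; rw [hF]; rfl
  have ha_nonneg : ∀ (i : ℕ) (x : ℝ), 0 ≤ x → 0 ≤ a i x := by
    intro i x hx
    have := Pprod_nonneg hx hdpos (i + 1)
    have hρi := hρ (i + 1) (Nat.le_add_left 1 i)
    positivity
  -- term bound via telescoping
  have ha_le : ∀ (i : ℕ) (x : ℝ), 0 ≤ x →
      a i x ≤ K * (x * (Pprod d x i - Pprod d x (i + 1))) := by
    intro i x hx
    rw [← Pprod_telescope hx hdpos i]
    have hp := Pprod_nonneg hx hdpos (i + 1)
    have hh := h (i + 1) (Nat.le_add_left 1 i)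
    calc a i x = ((i + 1 : ℕ) : ℝ) * ρ (i + 1) * Pprod d x (i + 1) := rfl
      _ ≤ K * d (i + 1) * Pprod d x (i + 1) := by
          apply mul_le_mul_of_nonneg_right _ hp
          exact_mod_cast hh
      _ = K * (d (i + 1) * Pprod d x (i + 1)) := by ring
  -- partial sums bounded
  have hsum_le : ∀ (x : ℝ), 0 ≤ x → ∀ N : ℕ,
      ∑ i ∈ Finset.range N, a i x ≤ K * x := by
    intro x hx N
    calc ∑ i ∈ Finset.range N, a i x
        ≤ ∑ i ∈ Finset.range N, K * (x * (Pprod d x i - Pprod d x (i + 1))) :=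
          Finset.sum_le_sum fun i _ => ha_le i x hx
      _ = K * x * ∑ i ∈ Finset.range N, (Pprod d x i - Pprod d x (i + 1)) := by
          rw [Finset.mul_sum]; exact Finset.sum_congr rfl fun i _ => by ring
      _ = K * x * (Pprod d x 0 - Pprod d x N) := by rw [Finset.sum_range_sub']
      _ ≤ K * x * 1 := by
          apply mul_le_mul_of_nonneg_left _ (by positivity)
          have := Pprod_nonneg hx hdpos N
          rw [Pprod_zero]; linarith
      _ = K * x := by ring
  have hsummable : ∀ (x : ℝ), 0 ≤ x → Summable (fun i => a i x) := by
    intro x hx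
    exact summable_of_sum_range_le (fun i => ha_nonneg i x hx) (hsum_le x hx)
  have htsum_le : ∀ (x : ℝ), 0 ≤ x → ∑' i : ℕ, a i x ≤ K * x := by
    intro x hx
    exact Summable.tsum_le_of_sum_range_le (hsummable x hx) (hsum_le x hx)
  have htsum_nonneg : ∀ (x : ℝ), 0 ≤ x → 0 ≤ ∑' i : ℕ, a i x := fun x hx =>
    tsum_nonneg fun i => ha_nonneg i x hx
  -- part 1
  have part1 : ∀ x : ℝ, 0 ≤ x → F x ≤ K := by
    intro x hx
    rw [hFa]
    have hx0 : 0 < x + d₀ := by linarith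
    rw [one_div, inv_mul_le_iff₀ hx0]
    have := htsum_le x hx
    nlinarith
  -- bounded above
  have hbddF : BddAbove (F '' Set.Ici 0) := by
    refine ⟨K, ?_⟩
    rintro y ⟨x, hx, rfl⟩
    exact part1 x hx
  have hne : (F '' Set.Ici 0).Nonempty := ⟨F 0, 0, Set.mem_Ici.2 le_rfl, rfl⟩
  -- F 0 = 0
  have hF0 : F 0 = 0 := by
    rw [hFa]
    have : ∀ i : ℕ, a i 0 = 0 := by
      intro i
      have : Pprod d 0 (i + 1) = 0 := by
        apply Finset.prod_eq_zero (Finset.mem_Icc.2 ⟨le_refl 1, Nat.le_add_left 1 i⟩)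
        simp
      simp [ha, this]
    simp [this]
  -- F 1 > 0
  have hF1 : 0 < F 1 := by
    rw [hFa]
    have hs := hsummable 1 zero_le_one
    have hle : a 0 1 ≤ ∑' i : ℕ, a i 1 := Summable.le_tsum hs 0 fun j _ => ha_nonneg j 1 zero_le_one
    have ha0 : 0 < a 0 1 := by
      have h1 : 0 < d 1 := hdpos 1 le_rfl
      have h2 : 0 < ρ 1 := hρ 1 le_rfl
      simp only [ha, Pprod]
      have : Finset.Icc 1 1 = {1} := rfl
      rw [this]
      simp only [Finset.prod_singleton]
      positivity
    have : 0 < ∑' i : ℕ, a i 1 := lt_of_lt_of_le ha0 hle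
    positivity
  have hmem1 : F 1 ∈ F '' Set.Ici 0 := ⟨1, Set.mem_Ici.2 zero_le_one, rfl⟩
  have part2 : 0 < sSup (F '' Set.Ici 0) := lt_of_lt_of_le hF1 (le_csSup hbddF hmem1)
  -- continuity of F on [0, M]
  have hcont : ∀ M : ℝ, 0 ≤ M → ContinuousOn F (Set.Icc 0 M) := by
    intro M hM
    set r : ℝ := M / (M + δ) with hr
    have hMδ : 0 < M + δ := by linarith
    have hr0 : 0 ≤ r := by positivity
    have hr1 : r < 1 := by rw [div_lt_one hMδ]; linarith
    -- factor bound
    have hfac : ∀ (x : ℝ), x ∈ Set.Icc 0 M → ∀ j : ℕ, 1 ≤ j → x / (x + d j) ≤ r := by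
      intro x hx j hj
      have hdj := hdδ j hj
      have hxdj : 0 < x + d j := by
        have := hdpos j hj; cases hx; linarith
      rw [hr, div_le_div_iff₀ hxdj hMδ]
      cases hx with
      | intro h1 h2 => nlinarith
    have hPle : ∀ (x : ℝ), x ∈ Set.Icc 0 M → ∀ n : ℕ, Pprod d x n ≤ r ^ n := by
      intro x hx n
      induction n with
      | zero => rw [Pprod_zero]; simp
      | succ n ih =>
        rw [Pprod_succ, pow_succ]
        have hxn : 0 ≤ Pprod d x n := Pprod_nonneg hx.1 hdpos n
        have hfn : x / (x + d (n + 1)) ≤ r := hfac x hx (n + 1) (Nat.le_add_left 1 n)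
        have hfn0 : 0 ≤ x / (x + d (n + 1)) := by
          have := hdpos (n + 1) (Nat.le_add_left 1 n)
          have := hx.1
          apply div_nonneg this; linarith
        exact mul_le_mul ih hfn hfn0 (by positivity)
    -- tsum continuous
    have hScont : ContinuousOn (fun x => ∑' i : ℕ, a i x) (Set.Icc 0 M) := by
      apply continuousOn_tsum (u := fun i => K * M * r ^ i)
      · intro i
        simp only [ha, Pprod]
        apply ContinuousOn.mul continuousOn_const
        apply continuousOn_finset_prod
        intro j hj
        have hj1 : 1 ≤ j := (Finset.mem_Icc.1 hj).1
        apply ContinuousOn.div continuousOn_id (by fun_prop)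
        intro x hx
        have h1 := hdpos j hj1
        have h2 := hx.1
        intro hc; linarith
      · exact (summable_geometric_of_lt_one hr0 hr1).mul_left _
      · intro i x hx
        rw [Real.norm_eq_abs, abs_of_nonneg (ha_nonneg i x hx.1)]
        have h1 : a i x ≤ K * (x * (Pprod d x i - Pprod d x (i + 1))) := ha_le i x hx.1
        have h2 : Pprod d x i ≤ r ^ i := hPle x hx i
        have h3 : 0 ≤ Pprod d x (i + 1) := Pprod_nonneg hx.1 hdpos (i + 1)
        have h4 : 0 ≤ x := hx.1
        have h5 : x ≤ M := hx.2
        have h6 : 0 ≤ Pprod d x i := Pprod_nonneg h4 hdpos i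
        calc a i x ≤ K * (x * (Pprod d x i - Pprod d x (i + 1))) := h1
          _ ≤ K * (x * Pprod d x i) := by
              nlinarith [mul_nonneg (mul_nonneg hK.le h4) h3]
          _ ≤ K * (M * r ^ i) := mul_le_mul_of_nonneg_left (mul_le_mul h5 h2 h6 hM) hK.le
          _ = K * M * r ^ i := by ring
    have : ContinuousOn (fun x : ℝ => (1 / (x + d₀)) * ∑' i : ℕ, a i x) (Set.Icc 0 M) := by
      apply ContinuousOn.mul _ hScont
      apply ContinuousOn.div continuousOn_const (by fun_prop)
      intro x hx
      have h1 := hx.1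
      intro hc; linarith
    exact this.congr fun x _ => hFa x
  -- part 3
  have part3 : ∀ c : ℝ, 0 < c → c < sSup (F '' Set.Ici 0) → ∃ x : ℝ, 0 < x ∧ F x = c := by
    intro c hc hcm
    obtain ⟨y, ⟨x₀, hx₀, rfl⟩, hcy⟩ := exists_lt_of_lt_csSup hne hcm
    have hx₀' : (0 : ℝ) ≤ x₀ := hx₀
    have hsub := intermediate_value_Icc hx₀' (hcont x₀ hx₀')
    have hcmem : c ∈ Set.Icc (F 0) (F x₀) := ⟨by rw [hF0]; linarith, le_of_lt hcy⟩
    obtain ⟨x, hxI, hxc⟩ := hsub hcmem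
    refine ⟨x, ?_, hxc⟩
    rcases lt_or_eq_of_le hxI.1 with h' | h'
    · exact h'
    · exfalso; rw [← h'] at hxc; rw [hF0] at hxc; linarith
  -- part 4
  have part4 : ∀ c : ℝ, sSup (F '' Set.Ici 0) < c → ¬ ∃ x : ℝ, 0 ≤ x ∧ F x = c := by
    rintro c hmc ⟨x, hx, hxc⟩
    have : c ≤ sSup (F '' Set.Ici 0) := hxc ▸ le_csSup hbddF ⟨x, hx, rfl⟩
    linarith
  exact ⟨part1, part2, part3, part4⟩
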